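/- Lower bound on error equals total variation of label proportions: in binary classification, the minimum of the error ∑_g w_g(π_g^0 α_g^{01} + π_g^1 α_g^{10}) over all row-stochastic 2×2 confusion matrices (α_g^{yz}) satisfying π_g^0 α_g^{01} + π_g^1(1 - α_g^{10}) = p̂_g^1 for each g equals ∑_g w_g |π_g^1 - p̂_g^1|, assuming π_g^1 ∈ [0,1] and p̂_g^1 ∈ [0,1] for each g. -/

import Mathlib

theorem min_error_eq_total_variation {G : Type*} [Fintype G] (w π1 p1 : G → ℝ)
    (hw : ∀ g, 0 ≤ w g) (hwsum : ∑ g, w g = 1)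
    (hπ : ∀ g, π1 g ∈ Set.Icc (0:ℝ) 1) (hp : ∀ g, p1 g ∈ Set.Icc (0:ℝ) 1) :
    IsLeast { E : ℝ | ∃ α01 α10 : G → ℝ,
        (∀ g, α01 g ∈ Set.Icc (0:ℝ) 1) ∧ (∀ g, α10 g ∈ Set.Icc (0:ℝ) 1) ∧
        (∀ g, (1 - π1 g) * α01 g + π1 g * (1 - α10 g) = p1 g) ∧
        E = ∑ g, w g * ((1 - π1 g) * α01 g + π1 g * α10 g) }
      (∑ g, w g * |π1 g - p1 g|) := by
  constructor
  · refine ⟨fun g => if π1 g ≤ p1 g then (p1 g - π1 g)/(1 - π1 g) else 0,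
      fun g => if π1 g ≤ p1 g then 0 else (π1 g - p1 g)/(π1 g), ?_, ?_, ?_, ?_⟩
    · intro g
      obtain ⟨hπ0, hπ1⟩ := hπ g
      obtain ⟨hp0, hp1⟩ := hp g
      by_cases h : π1 g ≤ p1 g
      · simp only [h, if_true]
        rcases eq_or_lt_of_le hπ1 with heq | hlt
        · rw [heq]; simp
        · constructor
          · exact div_nonneg (by linarith) (by linarith)
          · rw [div_le_one (by linarith)]; linarith
      · simp [h]
    · intro g
      obtain ⟨hπ0, hπ1⟩ := hπ g
      obtain ⟨hp0, hp1⟩ := hp g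
      by_cases h : π1 g ≤ p1 g
      · simp [h]
      · push_neg at h
        have hπpos : 0 < π1 g := lt_of_le_of_lt hp0 h
        simp only [h.not_ge, if_false]
        constructor
        · exact div_nonneg (by linarith) (by linarith)
        · rw [div_le_one hπpos]; linarith
    · intro g
      obtain ⟨hπ0, hπ1⟩ := hπ g
      obtain ⟨hp0, hp1⟩ := hp g
      by_cases h : π1 g ≤ p1 g
      · simp only [h, if_true]
        rcases eq_or_lt_of_le hπ1 with heq | hlt
        · have hp1' : p1 g = 1 := le_antisymm hp1 (heq ▸ h)
          rw [heq, hp1']; norm_num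
        · have hne : (1:ℝ) - π1 g ≠ 0 := by linarith
          have hcanc : (1 - π1 g) * ((p1 g - π1 g)/(1 - π1 g)) = p1 g - π1 g := by
            field_simp
          rw [hcanc]; ring
      · push_neg at h
        have hπpos : 0 < π1 g := lt_of_le_of_lt hp0 h
        simp only [h.not_ge, if_false]
        field_simp; ring
    · refine Finset.sum_congr rfl fun g _ => ?_
      obtain ⟨hπ0, hπ1⟩ := hπ g
      obtain ⟨hp0, hp1⟩ := hp g
      by_cases h : π1 g ≤ p1 g
      · simp only [h, if_true]
        rw [abs_of_nonpos (by linarith)]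
        rcases eq_or_lt_of_le hπ1 with heq | hlt
        · have hp1' : p1 g = 1 := le_antisymm hp1 (heq ▸ h)
          rw [heq, hp1']; norm_num
        · have hne : (1:ℝ) - π1 g ≠ 0 := by linarith
          have hcanc : (1 - π1 g) * ((p1 g - π1 g)/(1 - π1 g)) = p1 g - π1 g := by
            field_simp
          rw [hcanc]; ring
      · push_neg at h
        have hπpos : 0 < π1 g := lt_of_le_of_lt hp0 h
        simp only [h.not_ge, if_false]
        rw [abs_of_nonneg (by linarith)]
        field_simp; ring
  · rintro E ⟨α01, α10, h01, h10, hcon, rfl⟩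
    refine Finset.sum_le_sum fun g _ => ?_
    obtain ⟨hπ0, hπ1⟩ := hπ g
    obtain ⟨ha0, ha1⟩ := h01 g
    obtain ⟨hb0, hb1⟩ := h10 g
    have hc := hcon g
    have habs : |π1 g - p1 g| ≤ (1 - π1 g) * α01 g + π1 g * α10 g := by
      rw [abs_le]
      constructor
      · nlinarith
      · nlinarith
    exact mul_le_mul_of_nonneg_left habs (hw g)
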